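/- A signed complete bipartite graph Σ = (K_{n,n}, σ) is balanced if and only if the spectrum of D^max(Σ) (equivalently of D^min(Σ)) is: 3n − 2 with multiplicity 1, n − 2 with multiplicity 1, and −2 with multiplicity 2n − 2. -/

import Mathlib

open SimpleGraph

/-- The sign (product of edge signs) of a walk in a graph, computed along its darts. -/
def walkSign {V : Type*} {G : SimpleGraph V} (σ : V → V → ℤ) {u v : V} (p : G.Walk u v) : ℤ :=
  (p.darts.map fun d => σ d.toProd.1 d.toProd.2).prod

/-- `σ` is a signature on `G`: a symmetric function that is `±1`-valued on edges. -/
def IsSignature {V : Type*} (G : SimpleGraph V) (σ : V → V → ℤ) : Prop :=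
  (∀ u v, σ u v = σ v u) ∧ ∀ u v, G.Adj u v → σ u v = 1 ∨ σ u v = -1

/-- A signed graph is balanced when every cycle has sign `+1`. -/
def IsBalanced {V : Type*} (G : SimpleGraph V) (σ : V → V → ℤ) : Prop :=
  ∀ (u : V) (p : G.Walk u u), p.IsCycle → walkSign σ p = 1

/-- A walk is a shortest path when it is a path whose length is the graph distance
between its endpoints. -/
def IsShortestPath {V : Type*} {G : SimpleGraph V} {u v : V} (p : G.Walk u v) : Prop :=
  p.IsPath ∧ p.length = G.dist u v

open scoped Classical in
/-- `σmax u v = +1` if some shortest `u v`-path is positive, `-1` otherwise. -/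
noncomputable def sigmaMax {V : Type*} (G : SimpleGraph V) (σ : V → V → ℤ) (u v : V) : ℤ :=
  if ∃ p : G.Walk u v, IsShortestPath p ∧ walkSign σ p = 1 then 1 else -1

open scoped Classical in
/-- `σmin u v = +1` if all shortest `u v`-paths are positive, `-1` otherwise. -/
noncomputable def sigmaMin {V : Type*} (G : SimpleGraph V) (σ : V → V → ℤ) (u v : V) : ℤ :=
  if ∀ p : G.Walk u v, IsShortestPath p → walkSign σ p = 1 then 1 else -1

/-- The signed distance matrix `D^max`, with `(u,v)` entry `σmax(u,v)·d(u,v)`. -/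
noncomputable def Dmax {V : Type*} (G : SimpleGraph V) (σ : V → V → ℤ) : Matrix V V ℝ :=
  Matrix.of fun u v => (sigmaMax G σ u v : ℝ) * (G.dist u v : ℝ)

/-- The signed distance matrix `D^min`, with `(u,v)` entry `σmin(u,v)·d(u,v)`. -/
noncomputable def Dmin {V : Type*} (G : SimpleGraph V) (σ : V → V → ℤ) : Matrix V V ℝ :=
  Matrix.of fun u v => (sigmaMin G σ u v : ℝ) * (G.dist u v : ℝ)

/-- Two vertices are distance-compatible if all shortest paths between them have the
same sign. -/
def Compatible {V : Type*} (G : SimpleGraph V) (σ : V → V → ℤ) (u v : V) : Prop :=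
  ∀ p q : G.Walk u v, IsShortestPath p → IsShortestPath q → walkSign σ p = walkSign σ q

/-- A signed graph is distance-compatible if every pair of vertices is
distance-compatible. -/
def IsCompatibleGraph {V : Type*} (G : SimpleGraph V) (σ : V → V → ℤ) : Prop :=
  ∀ u v, Compatible G σ u v

/-- The largest eigenvalue of a (symmetric) real matrix: the supremum of the set of real
roots of its characteristic polynomial. -/
noncomputable def largestEigenvalue {n : Type*} [Fintype n] [DecidableEq n]
    (M : Matrix n n ℝ) : ℝ :=
  sSup {x : ℝ | M.charpoly.IsRoot x}


section MatrixAux0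
open Polynomial Matrix

variable {R : Type*} [CommRing R] {m : Type*} [Fintype m] [DecidableEq m]

lemma map_C_one : (1 : Matrix m m R).map (C : R → R[X]) = 1 := by
  ext i j; by_cases h : i = j <;> simp [Matrix.one_apply, h]

lemma my_charpoly_conj (P Pinv M : Matrix m m R) (h1 : P * Pinv = 1) (h2 : Pinv * P = 1) :
    (P * M * Pinv).charpoly = M.charpoly := by
  have hPP : (P.map (C : R → R[X])) * (Pinv.map C) = 1 := by
    rw [← Matrix.map_mul (f := (C : R →+* R[X])), h1, map_C_one]
  have key : charmatrix (P * M * Pinv) =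
      (P.map C) * (charmatrix M) * (Pinv.map C) := by
    rw [charmatrix, charmatrix]
    have hsc : (Matrix.scalar m (X : R[X])) = (X : R[X]) • (1 : Matrix m m R[X]) := by
      ext i j
      by_cases h : i = j <;> simp [Matrix.scalar_apply, Matrix.smul_apply, Matrix.one_apply, h]
    rw [mul_sub, sub_mul, hsc, mul_smul_comm, smul_mul_assoc, mul_one, hPP]
    congr 1
    show (C.mapMatrix (P * M * Pinv) : Matrix m m R[X]) = _
    rw [_root_.map_mul, _root_.map_mul]
    rfl
  have hdet : (P.map (C : R → R[X])).det * (Pinv.map C).det = 1 := by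
    rw [← Matrix.det_mul, hPP, Matrix.det_one]
  unfold Matrix.charpoly
  rw [key, Matrix.det_mul, Matrix.det_mul]
  rw [mul_comm, ← mul_assoc, mul_comm ((Pinv.map C).det), hdet, one_mul]

lemma my_charpoly_diagonal (d : m → R) :
    (diagonal d).charpoly = ∏ i, (X - C (d i)) := by
  have : charmatrix (diagonal d) = diagonal (fun i => (X : R[X]) - C (d i)) := by
    ext i j
    by_cases h : i = j
    · subst h; simp [charmatrix_apply_eq, diagonal_apply_eq]
    · simp [charmatrix_apply_ne _ _ _ h, diagonal_apply_ne _ h]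
  rw [Matrix.charpoly, this, det_diagonal]

end MatrixAux0

section Herm0
open Polynomial Matrix

variable {m : Type*} [Fintype m] [DecidableEq m] {M : Matrix m m ℝ} (hM : M.IsHermitian)

lemma herm_decomp :
    M = (hM.eigenvectorUnitary : Matrix m m ℝ) * diagonal hM.eigenvalues *
      star (hM.eigenvectorUnitary : Matrix m m ℝ) := by
  have := hM.spectral_theorem
  rwa [RCLike.ofReal_real_eq_id, Function.id_comp] at this

lemma herm_unit_mul : (hM.eigenvectorUnitary : Matrix m m ℝ) *
    star (hM.eigenvectorUnitary : Matrix m m ℝ) = 1 :=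
  (Matrix.mem_unitaryGroup_iff).mp (hM.eigenvectorUnitary).2

lemma herm_unit_mul' : star (hM.eigenvectorUnitary : Matrix m m ℝ) *
    (hM.eigenvectorUnitary : Matrix m m ℝ) = 1 :=
  (Matrix.mem_unitaryGroup_iff').mp (hM.eigenvectorUnitary).2


lemma herm_charpoly : M.charpoly = ∏ i, (X - C (hM.eigenvalues i)) := by
  conv_lhs => rw [herm_decomp hM]
  rw [my_charpoly_conj _ _ _ (herm_unit_mul hM) (herm_unit_mul' hM), my_charpoly_diagonal]

lemma herm_roots : M.charpoly.roots = Finset.univ.val.map hM.eigenvalues := by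
  rw [herm_charpoly hM]
  have : ∏ i, (X - C (hM.eigenvalues i)) =
      ((Finset.univ.val.map hM.eigenvalues).map (fun a => X - C a)).prod := by
    rw [Multiset.map_map]; rfl
  rw [this, roots_multiset_prod_X_sub_C]

lemma herm_trace : M.trace = ∑ i, hM.eigenvalues i := by
  conv_lhs => rw [herm_decomp hM]
  rw [Matrix.trace_mul_cycle, herm_unit_mul' hM, one_mul, trace_diagonal]

lemma herm_trace_sq : (M * M).trace = ∑ i, (hM.eigenvalues i)^2 := by
  conv_lhs => rw [herm_decomp hM]
  have : (hM.eigenvectorUnitary : Matrix m m ℝ) * diagonal hM.eigenvalues *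
      star (hM.eigenvectorUnitary : Matrix m m ℝ) *
      ((hM.eigenvectorUnitary : Matrix m m ℝ) * diagonal hM.eigenvalues *
      star (hM.eigenvectorUnitary : Matrix m m ℝ)) =
      (hM.eigenvectorUnitary : Matrix m m ℝ) * (diagonal hM.eigenvalues * diagonal hM.eigenvalues) *
      star (hM.eigenvectorUnitary : Matrix m m ℝ) := by
    rw [← mul_assoc, ← mul_assoc, mul_assoc _ _ ((hM.eigenvectorUnitary : Matrix m m ℝ)),
      herm_unit_mul' hM, mul_one]
    noncomm_ring
  rw [this, Matrix.trace_mul_cycle, herm_unit_mul' hM, one_mul, diagonal_mul_diagonal,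
    trace_diagonal]
  exact Finset.sum_congr rfl fun i _ => (sq _).symm

lemma herm_rank_two_smul_one :
    (M + (2:ℝ) • 1).rank =
      (Finset.univ.filter (fun i => hM.eigenvalues i ≠ -2)).card := by
  have h2 : ((2:ℝ) • (1 : Matrix m m ℝ)) =
      (hM.eigenvectorUnitary : Matrix m m ℝ) * ((2:ℝ) • 1) *
        star (hM.eigenvectorUnitary : Matrix m m ℝ) := by
    rw [mul_smul_comm, smul_mul_assoc, mul_one, herm_unit_mul hM]
  have key : M + (2:ℝ) • 1 =
      (hM.eigenvectorUnitary : Matrix m m ℝ) * diagonal (fun i => hM.eigenvalues i + 2) *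
        star (hM.eigenvectorUnitary : Matrix m m ℝ) := by
    conv_lhs => rw [herm_decomp hM, h2]
    rw [← add_mul, ← mul_add]
    congr 2
    ext i j
    by_cases h : i = j <;> simp [diagonal, Matrix.one_apply, h]
  have hu : IsUnit (hM.eigenvectorUnitary : Matrix m m ℝ).det := by
    apply IsUnit.of_mul_eq_one (star (hM.eigenvectorUnitary : Matrix m m ℝ)).det
    rw [← det_mul, herm_unit_mul hM, det_one]
  have hu' : IsUnit (star (hM.eigenvectorUnitary : Matrix m m ℝ)).det := by
    apply IsUnit.of_mul_eq_one ((hM.eigenvectorUnitary : Matrix m m ℝ)).det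
    rw [← det_mul, herm_unit_mul' hM, det_one]
  rw [key, rank_mul_eq_left_of_isUnit_det _ _ hu', rank_mul_eq_right_of_isUnit_det _ _ hu,
    rank_diagonal, Fintype.card_subtype]
  congr 1
  ext i
  simp only [Finset.mem_filter]
  constructor
  · rintro ⟨h1, h2⟩; exact ⟨h1, fun h => h2 (by rw [h]; ring)⟩
  · rintro ⟨h1, h2⟩; exact ⟨h1, fun h => h2 (by linarith)⟩


end Herm0

lemma multiset_spec (n : ℕ) (hn : 0 < n) (s : Multiset ℝ)
    (hcard : Multiset.card s = 2*n)
    (hcount : 2*n - 2 ≤ s.count (-2))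
    (hsum : s.sum = 0)
    (hsq : (s.map (fun x => x^2)).sum = 10*(n:ℝ)^2 - 8*n) :
    s = (3*(n:ℝ)-2) ::ₘ ((n:ℝ)-2) ::ₘ Multiset.replicate (2*n-2) (-2 : ℝ) := by
  classical
  set c := s.count (-2) with hc
  set t := s.filter (fun x => ¬ x = -2) with ht
  have hsplit : Multiset.replicate c (-2 : ℝ) + t = s := by
    rw [ht, hc, ← Multiset.filter_eq' s (-2)]
    exact Multiset.filter_add_not _ s
  have hcardt : c + Multiset.card t = 2*n := by
    rw [← hcard, ← hsplit]; simp
  have hcle : Multiset.card t ≤ 2 := by omega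
  have hsum' : -2 * (c:ℝ) + t.sum = 0 := by
    rw [← hsum, ← hsplit]; simp [Multiset.sum_replicate]; ring
  have hsq' : 4 * (c:ℝ) + (t.map (fun x => x^2)).sum = 10*(n:ℝ)^2 - 8*n := by
    rw [← hsq, ← hsplit]; simp [Multiset.sum_replicate]; ring
  have hn1 : (1:ℝ) ≤ (n:ℝ) := by exact_mod_cast hn
  interval_cases h : Multiset.card t
  · -- card t = 0
    have ht0 : t = 0 := Multiset.card_eq_zero.mp h
    rw [ht0] at hsum'
    simp at hsum'
    have : c = 2*n := by omega
    rw [this] at hsum'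
    push_cast at hsum'
    nlinarith
  · -- card t = 1
    obtain ⟨a, ha⟩ := Multiset.card_eq_one.mp h
    rw [ha] at hsum' hsq'
    simp at hsum' hsq'
    have hcn : c = 2*n - 1 := by omega
    have hcR : (c:ℝ) = 2*(n:ℝ) - 1 := by
      rw [hcn]; push_cast [Nat.cast_sub (by omega : 1 ≤ 2*n)]; ring
    rw [hcR] at hsum' hsq'
    nlinarith
  · -- card t = 2
    obtain ⟨a, b, hab⟩ := Multiset.card_eq_two.mp h
    rw [hab] at hsum' hsq'
    simp at hsum' hsq'
    have hcn : c = 2*n - 2 := by omega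
    have hcR : (c:ℝ) = 2*(n:ℝ) - 2 := by
      rw [hcn]; push_cast [Nat.cast_sub (by omega : 2 ≤ 2*n)]; ring
    rw [hcR] at hsum' hsq'
    have hb0 : b = 4*(n:ℝ)-4-a := by linarith
    rw [hb0] at hsq'
    have hquad : (a - (3*(n:ℝ)-2)) * (a - ((n:ℝ)-2)) = 0 := by linear_combination (1/2) * hsq'
    have hfin : s = a ::ₘ b ::ₘ Multiset.replicate (2*n-2) (-2:ℝ) := by
      rw [← hsplit, hab, ← hcn, add_comm]
      rfl
    rcases mul_eq_zero.mp hquad with h1 | h1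
    · have ha' : a = 3*(n:ℝ)-2 := by linarith
      have hb' : b = (n:ℝ)-2 := by nlinarith
      rw [hfin, ha', hb']
    · have ha' : a = (n:ℝ)-2 := by linarith
      have hb' : b = 3*(n:ℝ)-2 := by nlinarith
      rw [hfin, ha', hb', Multiset.cons_swap]

section Minor
open Matrix

lemma rank_ge_three_of_minor {m : Type*} [Fintype m] [DecidableEq m]
    (A : Matrix m m ℝ) (g : Fin 3 → m) (h : (A.submatrix g g).det ≠ 0) :
    3 ≤ A.rank := by
  classical
  set P : Matrix (Fin 3) m ℝ := Matrix.of (fun k u => if u = g k then 1 else 0) with hP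
  set Q : Matrix m (Fin 3) ℝ := Matrix.of (fun u k => if u = g k then 1 else 0) with hQ
  have key : A.submatrix g g = P * (A * Q) := by
    ext k l
    simp only [Matrix.mul_apply, submatrix_apply, hP, hQ, Matrix.of_apply]
    simp only [ite_mul, one_mul, zero_mul]
    rw [Finset.sum_ite_eq' Finset.univ (g k)
      (fun u => ∑ x1 : m, A u x1 * if x1 = g l then 1 else 0)]
    simp only [Finset.mem_univ, if_true, mul_ite, mul_one, mul_zero]
    rw [Finset.sum_ite_eq' Finset.univ (g l) (fun v => A (g k) v)]
    simp
  have h3 : (A.submatrix g g).rank = 3 := by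
    rw [Matrix.rank_of_isUnit _ ((Matrix.isUnit_iff_isUnit_det _).mpr (isUnit_iff_ne_zero.mpr h))]
    simp
  calc (3:ℕ) = (A.submatrix g g).rank := h3.symm
    _ ≤ (A * Q).rank := by rw [key]; exact rank_mul_le_right _ _
    _ ≤ A.rank := rank_mul_le_left _ _

end Minor


section GraphAux
open SimpleGraph
variable {W : Type*} {H : SimpleGraph W} {σ : W → W → ℤ}

@[simp] lemma walkSign_nil {u : W} : walkSign σ (Walk.nil : H.Walk u u) = 1 := by
  simp [walkSign]

@[simp] lemma walkSign_cons {u w v : W} (h : H.Adj u w) (p : H.Walk w v) :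
    walkSign σ (Walk.cons h p) = σ u w * walkSign σ p := by
  simp [walkSign]

lemma walkSign_length_one {u v : W} (p : H.Walk u v) (hp : p.length = 1) :
    walkSign σ p = σ u v := by
  cases p with
  | nil => simp at hp
  | cons h q =>
    cases q with
    | nil => simp
    | cons h' q' => simp [Walk.length_cons] at hp

lemma walkSign_length_two {u v : W} (p : H.Walk u v) (hp : p.length = 2) :
    ∃ w, H.Adj u w ∧ H.Adj w v ∧ walkSign σ p = σ u w * σ w v := by
  cases p with
  | nil => simp at hp
  | cons h q =>
    cases q with
    | nil => simp at hp
    | cons h' q' =>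
      cases q' with
      | nil => exact ⟨_, h, h', by simp⟩
      | cons h'' q'' => simp [Walk.length_cons] at hp

lemma walkSign_pm (hσ : IsSignature H σ) {u v : W} (p : H.Walk u v) :
    walkSign σ p = 1 ∨ walkSign σ p = -1 := by
  induction p with
  | nil => left; simp
  | cons h q ih =>
    rcases hσ.2 _ _ h with h1 | h1 <;> rcases ih with h2 | h2 <;>
      simp [h1, h2]

lemma walkSign_reverse (hsym : ∀ a b, σ a b = σ b a) {u v : W} (p : H.Walk u v) :
    walkSign σ p.reverse = walkSign σ p := by
  unfold walkSign
  rw [Walk.darts_reverse, List.map_reverse, List.prod_reverse, List.map_map]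
  congr 1
  apply List.map_congr_left
  intro d _
  exact hsym _ _

lemma isShortestPath_reverse (hsym : ∀ a b, σ a b = σ b a) {u v : W} {p : H.Walk u v}
    (hp : IsShortestPath p) : IsShortestPath p.reverse :=
  ⟨hp.1.reverse, by rw [Walk.length_reverse, hp.2, SimpleGraph.dist_comm]⟩

lemma sigmaMax_comm (hsym : ∀ a b, σ a b = σ b a) (u v : W) :
    sigmaMax H σ u v = sigmaMax H σ v u := by
  classical
  unfold sigmaMax
  congr 1
  simp only [eq_iff_iff]
  constructor
  · rintro ⟨p, hp, hs⟩
    exact ⟨p.reverse, isShortestPath_reverse hsym hp, by rw [walkSign_reverse hsym]; exact hs⟩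
  · rintro ⟨p, hp, hs⟩
    exact ⟨p.reverse, isShortestPath_reverse hsym hp, by rw [walkSign_reverse hsym]; exact hs⟩

lemma sigmaMin_comm (hsym : ∀ a b, σ a b = σ b a) (u v : W) :
    sigmaMin H σ u v = sigmaMin H σ v u := by
  classical
  unfold sigmaMin
  congr 1
  simp only [eq_iff_iff]
  constructor
  · intro hall p hp
    rw [← walkSign_reverse hsym]
    exact hall p.reverse (isShortestPath_reverse hsym hp)
  · intro hall p hp
    rw [← walkSign_reverse hsym]
    exact hall p.reverse (isShortestPath_reverse hsym hp)

lemma sigmaMax_pm (u v : W) : sigmaMax H σ u v = 1 ∨ sigmaMax H σ u v = -1 := by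
  classical
  unfold sigmaMax; split <;> simp

lemma sigmaMin_pm (u v : W) : sigmaMin H σ u v = 1 ∨ sigmaMin H σ u v = -1 := by
  classical
  unfold sigmaMin; split <;> simp

lemma edge_isShortestPath {u v : W} (h : H.Adj u v) :
    IsShortestPath (Walk.cons h Walk.nil) := by
  refine ⟨?_, ?_⟩
  · simp [Walk.isPath_def, h.ne]
  · simp [SimpleGraph.dist_eq_one_iff_adj.mpr h]

lemma shortest_length_adj {u v : W} (h : H.Adj u v) {p : H.Walk u v}
    (hp : IsShortestPath p) : walkSign σ p = σ u v :=
  walkSign_length_one p (by rw [hp.2, SimpleGraph.dist_eq_one_iff_adj.mpr h])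

lemma sigmaMax_adj (hσ : IsSignature H σ) {u v : W} (h : H.Adj u v) :
    sigmaMax H σ u v = σ u v := by
  classical
  unfold sigmaMax
  rcases hσ.2 u v h with h1 | h1
  · rw [if_pos ⟨Walk.cons h Walk.nil, edge_isShortestPath h, by simp [h1]⟩, h1]
  · rw [if_neg, h1]
    rintro ⟨p, hp, hs⟩
    rw [shortest_length_adj h hp, h1] at hs
    norm_num at hs

lemma sigmaMin_adj (hσ : IsSignature H σ) {u v : W} (h : H.Adj u v) :
    sigmaMin H σ u v = σ u v := by
  classical
  unfold sigmaMin
  rcases hσ.2 u v h with h1 | h1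
  · rw [if_pos, h1]
    intro p hp
    rw [shortest_length_adj h hp, h1]
  · rw [if_neg, h1]
    intro hall
    have := hall (Walk.cons h Walk.nil) (edge_isShortestPath h)
    simp [h1] at this

end GraphAux

section GraphAux2
open SimpleGraph
variable {W : Type*} {H : SimpleGraph W} {σ : W → W → ℤ}

lemma dist_adj {u v : W} (h : H.Adj u v) : H.dist u v = 1 :=
  SimpleGraph.dist_eq_one_iff_adj.mpr h

lemma dist_two {u v w : W} (huv : u ≠ v) (hnadj : ¬ H.Adj u v)
    (h1 : H.Adj u w) (h2 : H.Adj w v) : H.dist u v = 2 := by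
  have hle : H.dist u v ≤ 2 := by
    have := SimpleGraph.dist_le (Walk.cons h1 (Walk.cons h2 Walk.nil))
    simpa using this
  have hne0 : H.dist u v ≠ 0 := by
    rw [SimpleGraph.dist_ne_zero_iff_ne_and_reachable]
    exact ⟨huv, ⟨Walk.cons h1 (Walk.cons h2 Walk.nil)⟩⟩
  have hne1 : H.dist u v ≠ 1 := fun hc => hnadj (SimpleGraph.dist_eq_one_iff_adj.mp hc)
  omega

lemma twoPath_isShortestPath {u v w : W} (huv : u ≠ v) (hnadj : ¬ H.Adj u v)
    (h1 : H.Adj u w) (h2 : H.Adj w v) :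
    IsShortestPath (Walk.cons h1 (Walk.cons h2 Walk.nil)) := by
  refine ⟨?_, ?_⟩
  · simp [Walk.isPath_def, h1.ne, h2.ne, huv, List.nodup_cons]
  · simp [dist_two huv hnadj h1 h2]

/-- a potential (switching function) for the signature -/
def IsPot (H : SimpleGraph W) (σ : W → W → ℤ) (s : W → ℤ) : Prop :=
  (∀ v, s v = 1 ∨ s v = -1) ∧ ∀ u v, H.Adj u v → σ u v = s u * s v

lemma walkSign_pot {s : W → ℤ} (hs : IsPot H σ s) {u v : W} (p : H.Walk u v) :
    walkSign σ p = s u * s v := by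
  induction p with
  | nil => rename_i x; rcases hs.1 x with h | h <;> simp [h]
  | @cons a b c h q ih =>
    rw [walkSign_cons, ih, hs.2 _ _ h]
    rcases hs.1 b with h' | h' <;> rcases hs.1 a with h'' | h'' <;> simp [h', h''] <;> ring

lemma pot_balanced {s : W → ℤ} (hs : IsPot H σ s) : IsBalanced H σ := by
  intro u p _
  rw [walkSign_pot hs]
  rcases hs.1 u with h | h <;> simp [h]

lemma sigmaMax_pot {s : W → ℤ} (hs : IsPot H σ s) {u v : W} (hr : H.Reachable u v) :
    sigmaMax H σ u v = s u * s v := by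
  classical
  obtain ⟨p, hp, hl⟩ := hr.exists_path_of_dist
  unfold sigmaMax
  by_cases hsv : s u * s v = 1
  · rw [if_pos ⟨p, ⟨hp, hl⟩, by rw [walkSign_pot hs, hsv]⟩, hsv]
  · have hsv' : s u * s v = -1 := by
      rcases hs.1 u with h | h <;> rcases hs.1 v with h' | h' <;> simp [h, h'] at hsv ⊢
    rw [if_neg, hsv']
    rintro ⟨q, hq, hqs⟩
    rw [walkSign_pot hs, hsv'] at hqs
    norm_num at hqs

lemma sigmaMin_pot {s : W → ℤ} (hs : IsPot H σ s) {u v : W} (hr : H.Reachable u v) :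
    sigmaMin H σ u v = s u * s v := by
  classical
  obtain ⟨p, hp, hl⟩ := hr.exists_path_of_dist
  unfold sigmaMin
  by_cases hsv : s u * s v = 1
  · rw [if_pos, hsv]
    intro q hq
    rw [walkSign_pot hs, hsv]
  · have hsv' : s u * s v = -1 := by
      rcases hs.1 u with h | h <;> rcases hs.1 v with h' | h' <;> simp [h, h'] at hsv ⊢
    rw [if_neg, hsv']
    intro hall
    have := hall p ⟨hp, hl⟩
    rw [walkSign_pot hs, hsv'] at this
    norm_num at this

end GraphAux2
section Knn
open SimpleGraph
variable {n : ℕ}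
local notation "G" => completeBipartiteGraph (Fin n) (Fin n)
variable {σ : (Fin n ⊕ Fin n) → (Fin n ⊕ Fin n) → ℤ}

lemma knn_not_adj_of_two {u w v : Fin n ⊕ Fin n} (h1 : (G).Adj u w) (h2 : (G).Adj w v) :
    ¬ (G).Adj u v := by
  rcases u with i | i <;> rcases w with a | a <;> rcases v with b | b <;> simp_all

lemma sq_one_of_pm {a : ℤ} (h : a = 1 ∨ a = -1) : a * a = 1 := by rcases h with h | h <;> simp [h]

lemma knn_adj_sign_product_self (hσ : IsSignature (G) σ) {u w : Fin n ⊕ Fin n}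
    (h1 : (G).Adj u w) : σ u w * σ w u = 1 := by
  rw [← hσ.1 u w]; exact sq_one_of_pm (hσ.2 u w h1)

/-- the 4-cycle condition -/
lemma balanced_H4 (hσ : IsSignature (G) σ) (hb : IsBalanced (G) σ)
    {u v w w' : Fin n ⊕ Fin n} (h1 : (G).Adj u w) (h2 : (G).Adj w v)
    (h3 : (G).Adj u w') (h4 : (G).Adj w' v) :
    σ u w * σ w v = σ u w' * σ w' v := by
  by_cases hww : w = w'
  · subst hww; rfl
  by_cases huv : u = v
  · subst huv
    rw [knn_adj_sign_product_self hσ h1, knn_adj_sign_product_self hσ h3]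
  · have hcyc := hb u (Walk.cons h1 (Walk.cons h2 (Walk.cons h4.symm (Walk.cons h3.symm Walk.nil))))
      (by
        rw [Walk.isCycle_def]
        refine ⟨?_, by simp, ?_⟩
        · rw [Walk.isTrail_def]
          have e1 : u ≠ w := h1.ne
          have e2 : w ≠ v := h2.ne
          have e3 : u ≠ w' := h3.ne
          have e4 : w' ≠ v := h4.ne
          simp [Sym2.eq_iff]
          tauto
        · have e1 : u ≠ w := h1.ne
          have e2 : w ≠ v := h2.ne
          have e3 : u ≠ w' := h3.ne
          have e4 : w' ≠ v := h4.ne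
          simp [List.nodup_cons]
          tauto)
    simp only [walkSign_cons, walkSign_nil, mul_one] at hcyc
    rw [hσ.1 v w', hσ.1 w' u] at hcyc
    rcases hσ.2 u w h1 with a1 | a1 <;> rcases hσ.2 w v h2 with a2 | a2 <;>
      rcases hσ.2 u w' h3 with a3 | a3 <;> rcases hσ.2 w' v h4 with a4 | a4 <;>
      rw [a1, a2, a3, a4] at hcyc ⊢ <;> omega

lemma H4_pot (hσ : IsSignature (G) σ) (hn : 0 < n)
    (h4 : ∀ u v w w' : Fin n ⊕ Fin n, (G).Adj u w → (G).Adj w v → (G).Adj u w' →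
      (G).Adj w' v → σ u w * σ w v = σ u w' * σ w' v) :
    ∃ s, IsPot (G) σ s := by
  set z : Fin n := ⟨0, hn⟩ with hz
  set b : Fin n ⊕ Fin n := Sum.inl z with hb
  set r : Fin n ⊕ Fin n := Sum.inr z with hr
  refine ⟨Sum.elim (fun i => σ b r * σ r (Sum.inl i)) (fun j => σ b (Sum.inr j)), ?_, ?_⟩
  · intro v
    rcases v with i | j
    · have p1 := hσ.2 b r (by simp [hb, hr])
      have p2 := hσ.2 r (Sum.inl i) (by simp [hb, hr])
      rcases p1 with p1 | p1 <;> rcases p2 with p2 | p2 <;> simp [p1, p2]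
    · exact hσ.2 b (Sum.inr j) (by simp [hb, hr])
  · have key : ∀ (i j : Fin n),
        σ (Sum.inl i) (Sum.inr j) = (σ b r * σ r (Sum.inl i)) * σ b (Sum.inr j) := by
      intro i j
      have heq := h4 (Sum.inl i) b (Sum.inr j) r (by simp) (by simp [hb]) (by simp [hr])
        (by simp [hb, hr])
      have s1 : σ (Sum.inr j) b = σ b (Sum.inr j) := hσ.1 _ _
      have s2 : σ (Sum.inl i) r = σ r (Sum.inl i) := hσ.1 _ _
      have s3 : σ r b = σ b r := hσ.1 _ _
      rw [s1, s2, s3] at heq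
      rcases hσ.2 (Sum.inl i) (Sum.inr j) (by simp) with a1 | a1 <;>
        rcases hσ.2 b (Sum.inr j) (by simp [hb]) with a2 | a2 <;>
        rcases hσ.2 b r (by simp [hb, hr]) with a3 | a3 <;>
        rcases hσ.2 r (Sum.inl i) (by simp [hr]) with a4 | a4 <;>
        rw [a1, a2, a3, a4] at heq ⊢ <;> omega
    intro x y hxy
    rcases x with i | j <;> rcases y with i' | j'
    · simp at hxy
    · exact key i j'
    · rw [hσ.1, key i' j, Sum.elim_inl, Sum.elim_inr]; ring
    · simp at hxy

lemma not_balanced_data (hσ : IsSignature (G) σ) (hn : 0 < n)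
    (hnb : ¬ IsBalanced (G) σ) :
    ∃ u v w w' : Fin n ⊕ Fin n, (G).Adj u w ∧ (G).Adj w v ∧ (G).Adj u w' ∧ (G).Adj w' v ∧
      u ≠ v ∧ ¬ (G).Adj u v ∧ σ u w * σ w v = 1 ∧ σ u w' * σ w' v = -1 := by
  have hh4 : ¬ (∀ u v w w' : Fin n ⊕ Fin n, (G).Adj u w → (G).Adj w v → (G).Adj u w' →
      (G).Adj w' v → σ u w * σ w v = σ u w' * σ w' v) := by
    intro h
    obtain ⟨s, hs⟩ := H4_pot hσ hn h
    exact hnb (pot_balanced hs)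
  push_neg at hh4
  obtain ⟨u, v, w, w', h1, h2, h3, h4, hne⟩ := hh4
  have huv : u ≠ v := by
    rintro rfl
    rw [knn_adj_sign_product_self hσ h1, knn_adj_sign_product_self hσ h3] at hne
    exact hne rfl
  have hnadj : ¬ (G).Adj u v := knn_not_adj_of_two h1 h2
  have q1 : σ u w * σ w v = 1 ∨ σ u w * σ w v = -1 := by
    rcases hσ.2 u w h1 with a1 | a1 <;> rcases hσ.2 w v h2 with a2 | a2 <;> simp [a1, a2]
  have q2 : σ u w' * σ w' v = 1 ∨ σ u w' * σ w' v = -1 := by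
    rcases hσ.2 u w' h3 with a1 | a1 <;> rcases hσ.2 w' v h4 with a2 | a2 <;> simp [a1, a2]
  rcases q1 with q1 | q1 <;> rcases q2 with q2 | q2
  · exact absurd (q1.trans q2.symm) hne
  · exact ⟨u, v, w, w', h1, h2, h3, h4, huv, hnadj, q1, q2⟩
  · exact ⟨u, v, w', w, h3, h4, h1, h2, huv, hnadj, q2, q1⟩
  · exact absurd (q1.trans q2.symm) hne

lemma knn_reachable (hn : 0 < n) (u v : Fin n ⊕ Fin n) : (G).Reachable u v := by
  set z : Fin n := ⟨0, hn⟩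
  rcases u with i | i <;> rcases v with j | j
  · by_cases h : i = j
    · subst h; exact Reachable.refl _
    · exact ⟨Walk.cons (by simp : (G).Adj (Sum.inl i) (Sum.inr z))
        (Walk.cons (by simp) Walk.nil)⟩
  · exact ⟨Walk.cons (by simp) Walk.nil⟩
  · exact ⟨Walk.cons (by simp) Walk.nil⟩
  · by_cases h : i = j
    · subst h; exact Reachable.refl _
    · exact ⟨Walk.cons (by simp : (G).Adj (Sum.inr i) (Sum.inl z))
        (Walk.cons (by simp) Walk.nil)⟩

lemma knn_dist_ll (hn : 0 < n) (i j : Fin n) (h : i ≠ j) :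
    (G).dist (Sum.inl i) (Sum.inl j) = 2 := by
  set z : Fin n := ⟨0, hn⟩
  exact dist_two (by simp [h]) (by simp)
    (by simp : (G).Adj (Sum.inl i) (Sum.inr z)) (by simp)

lemma knn_dist_rr (hn : 0 < n) (i j : Fin n) (h : i ≠ j) :
    (G).dist (Sum.inr i) (Sum.inr j) = 2 := by
  set z : Fin n := ⟨0, hn⟩
  exact dist_two (by simp [h]) (by simp)
    (by simp : (G).Adj (Sum.inr i) (Sum.inl z)) (by simp)

end Knn

section Core
open SimpleGraph Matrix Polynomial Finset
variable {n : ℕ}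
local notation "G" => completeBipartiteGraph (Fin n) (Fin n)
variable {σ : (Fin n ⊕ Fin n) → (Fin n ⊕ Fin n) → ℤ}

lemma row_sum_aux (c : ℝ) (i : Fin n) : ∑ j : Fin n, (if j = i then 0 else c) = c * n - c := by
  have h : ∀ j : Fin n, (if j = i then (0:ℝ) else c) = c - (if j = i then c else 0) := by
    intro j; by_cases h : j = i <;> simp [h]
  rw [Finset.sum_congr rfl (fun j _ => h j), Finset.sum_sub_distrib,
    Finset.sum_ite_eq' Finset.univ i (fun _ => c)]
  simp [mul_comm]

lemma knn_sum_dist_sq (hn : 0 < n) :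
    ∑ u : Fin n ⊕ Fin n, ∑ v : Fin n ⊕ Fin n, ((G).dist u v : ℝ)^2 = 10*(n:ℝ)^2 - 8*(n:ℝ) := by
  have hll : ∀ i : Fin n, ∑ j : Fin n, (((G).dist (Sum.inl i) (Sum.inl j) : ℝ))^2 = 4*n - 4 := by
    intro i
    have h : ∀ j : Fin n, (((G).dist (Sum.inl i) (Sum.inl j) : ℝ))^2
        = if j = i then 0 else 4 := by
      intro j
      by_cases h : j = i
      · subst h; simp [SimpleGraph.dist_self]
      · rw [knn_dist_ll hn i j (Ne.symm h), if_neg h]; norm_num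
    rw [Finset.sum_congr rfl (fun j _ => h j), row_sum_aux]
  have hrr : ∀ i : Fin n, ∑ j : Fin n, (((G).dist (Sum.inr i) (Sum.inr j) : ℝ))^2 = 4*n - 4 := by
    intro i
    have h : ∀ j : Fin n, (((G).dist (Sum.inr i) (Sum.inr j) : ℝ))^2
        = if j = i then 0 else 4 := by
      intro j
      by_cases h : j = i
      · subst h; simp [SimpleGraph.dist_self]
      · rw [knn_dist_rr hn i j (Ne.symm h), if_neg h]; norm_num
    rw [Finset.sum_congr rfl (fun j _ => h j), row_sum_aux]
  have hlr : ∀ i : Fin n, ∑ j : Fin n, (((G).dist (Sum.inl i) (Sum.inr j) : ℝ))^2 = n := by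
    intro i
    have h : ∀ j : Fin n, (((G).dist (Sum.inl i) (Sum.inr j) : ℝ))^2 = 1 := by
      intro j; rw [dist_adj (by simp)]; norm_num
    rw [Finset.sum_congr rfl (fun j _ => h j)]; simp
  have hrl : ∀ i : Fin n, ∑ j : Fin n, (((G).dist (Sum.inr i) (Sum.inl j) : ℝ))^2 = n := by
    intro i
    have h : ∀ j : Fin n, (((G).dist (Sum.inr i) (Sum.inl j) : ℝ))^2 = 1 := by
      intro j; rw [dist_adj (by simp)]; norm_num
    rw [Finset.sum_congr rfl (fun j _ => h j)]; simp
  rw [Fintype.sum_sum_type]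
  have e1 : ∀ i : Fin n, ∑ v : Fin n ⊕ Fin n, (((G).dist (Sum.inl i) v : ℝ))^2 = 5*n - 4 := by
    intro i; rw [Fintype.sum_sum_type, hll i, hlr i]; ring
  have e2 : ∀ i : Fin n, ∑ v : Fin n ⊕ Fin n, (((G).dist (Sum.inr i) v : ℝ))^2 = 5*n - 4 := by
    intro i; rw [Fintype.sum_sum_type, hrl i, hrr i]; ring
  rw [Finset.sum_congr rfl (fun i _ => e1 i), Finset.sum_congr rfl (fun i _ => e2 i)]
  simp [Finset.sum_const]
  ring

lemma filter_eig_card {m : Type*} [Fintype m] [DecidableEq m] (f : m → ℝ) :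
    (Finset.univ.filter (fun i => (-2:ℝ) = f i)).card
      + (Finset.univ.filter (fun i => f i ≠ -2)).card = Fintype.card m := by
  classical
  have h : (Finset.univ.filter (fun i => f i ≠ -2))
      = Finset.univ.filter (fun i => ¬ ((-2:ℝ) = f i)) := by
    apply Finset.filter_congr; intro i _; simp [eq_comm]
  rw [h, Finset.card_filter_add_card_filter_not, Finset.card_univ]

end Core

section Fwd
open SimpleGraph Matrix Polynomial Finset
variable {n : ℕ}
local notation "G" => completeBipartiteGraph (Fin n) (Fin n)
variable {σ : (Fin n ⊕ Fin n) → (Fin n ⊕ Fin n) → ℤ}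

lemma forward_core (hn : 0 < n) (s : Fin n ⊕ Fin n → ℤ)
    (hs1 : ∀ v, s v = 1 ∨ s v = -1)
    (M : Matrix (Fin n ⊕ Fin n) (Fin n ⊕ Fin n) ℝ)
    (hentry : ∀ u v, M u v = ((s u : ℝ) * (s v : ℝ)) * ((G).dist u v : ℝ)) :
    M.charpoly.roots = (3*(n:ℝ)-2) ::ₘ ((n:ℝ)-2) ::ₘ Multiset.replicate (2*n-2) (-2:ℝ) := by
  classical
  have hs2 : ∀ v, (s v : ℝ) * (s v : ℝ) = 1 := by
    intro v; rcases hs1 v with h | h <;> rw [h] <;> norm_num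
  have hherm : M.IsHermitian := by
    rw [Matrix.IsHermitian]
    ext u v
    rw [conjTranspose_apply, hentry, hentry u v, star_trivial, SimpleGraph.dist_comm]
    ring
  set eig := hherm.eigenvalues with heig
  -- rank bound
  have hrank : (M + (2:ℝ)•1).rank ≤ 2 := by
    set L : (Fin n ⊕ Fin n) → ℝ := fun u => if u.isLeft then 1 else 0 with hL
    set Xf : Matrix (Fin n ⊕ Fin n) (Fin 2) ℝ :=
      Matrix.of (fun u k => (s u : ℝ) * (if k = 0 then 1 + L u else 2 - L u)) with hXf
    set Yf : Matrix (Fin 2) (Fin n ⊕ Fin n) ℝ :=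
      Matrix.of (fun k v => (s v : ℝ) * (if k = 0 then L v else 1 - L v)) with hYf
    have hfac : M + (2:ℝ)•1 = Xf * Yf := by
      have hx0 : ∀ u, Xf u 0 = (s u:ℝ) * (1 + L u) := fun u => by simp [hXf]
      have hx1 : ∀ u, Xf u 1 = (s u:ℝ) * (2 - L u) := fun u => by simp [hXf]
      have hy0 : ∀ v, Yf 0 v = (s v:ℝ) * (L v) := fun v => by simp [hYf]
      have hy1 : ∀ v, Yf 1 v = (s v:ℝ) * (1 - L v) := fun v => by simp [hYf]
      ext u v
      rw [Matrix.add_apply, Matrix.mul_apply, Fin.sum_univ_two, hentry,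
        hx0, hx1, hy0, hy1, Matrix.smul_apply, smul_eq_mul]
      rcases u with i | i <;> rcases v with j | j
      · by_cases hij : i = j
        · subst hij
          rw [Matrix.one_apply_eq, SimpleGraph.dist_self]
          simp only [hL, Sum.isLeft_inl, if_true, Nat.cast_zero]
          linear_combination (-2 : ℝ) * hs2 (Sum.inl i)
        · rw [knn_dist_ll hn i j hij, Matrix.one_apply_ne (by simp [hij])]
          simp only [hL, Sum.isLeft_inl, if_true]
          push_cast
          ring
      · rw [dist_adj (by simp), Matrix.one_apply_ne (by simp)]
        simp only [hL, Sum.isLeft_inl, Sum.isLeft_inr, if_true, if_false]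
        push_cast
        ring
      · rw [dist_adj (by simp), Matrix.one_apply_ne (by simp)]
        simp only [hL, Sum.isLeft_inl, Sum.isLeft_inr, if_true, if_false]
        push_cast
        ring
      · by_cases hij : i = j
        · subst hij
          rw [Matrix.one_apply_eq, SimpleGraph.dist_self]
          simp only [hL, Sum.isLeft_inr, Bool.false_eq_true, if_false, Nat.cast_zero]
          linear_combination (-2 : ℝ) * hs2 (Sum.inr i)
        · rw [knn_dist_rr hn i j hij, Matrix.one_apply_ne (by simp [hij])]
          simp only [hL, Sum.isLeft_inr, Bool.false_eq_true, if_false]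
          push_cast
          ring
    calc (M + (2:ℝ)•1).rank = (Xf * Yf).rank := by rw [hfac]
      _ ≤ Xf.rank := rank_mul_le_left _ _
      _ ≤ Fintype.card (Fin 2) := rank_le_card_width _
      _ = 2 := by simp
  -- traces
  have htr : M.trace = 0 := by
    have : ∀ u, M u u = 0 := by
      intro u; rw [hentry, SimpleGraph.dist_self]; simp
    simp [Matrix.trace, Matrix.diag, this]
  have htr2 : (M * M).trace = 10*(n:ℝ)^2 - 8*(n:ℝ) := by
    have hterm : ∀ u v, M u v * M v u = ((G).dist u v : ℝ)^2 := by
      intro u v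
      rw [hentry, hentry, SimpleGraph.dist_comm (u := v) (v := u)]
      linear_combination ((s v:ℝ)*(s v)*(((G).dist u v : ℝ))^2) * hs2 u
        + (((G).dist u v : ℝ))^2 * hs2 v
    have : (M * M).trace = ∑ u : Fin n ⊕ Fin n, ∑ v : Fin n ⊕ Fin n, M u v * M v u := by
      simp [Matrix.trace, Matrix.diag, Matrix.mul_apply]
    rw [this, Finset.sum_congr rfl (fun u _ => Finset.sum_congr rfl (fun v _ => hterm u v))]
    exact knn_sum_dist_sq hn
  -- spectrum
  rw [herm_roots hherm]
  apply multiset_spec n hn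
  · rw [Multiset.card_map]
    have : Multiset.card (Finset.univ.val : Multiset (Fin n ⊕ Fin n))
        = Fintype.card (Fin n ⊕ Fin n) := rfl
    rw [this]
    simp
    omega
  · -- count bound
    have hcard2 : (Finset.univ.filter (fun i => eig i ≠ -2)).card ≤ 2 := by
      rw [← herm_rank_two_smul_one hherm]
      exact hrank
    have hsplit := filter_eig_card eig
    rw [Multiset.count_map]
    have hmc : Multiset.card (Multiset.filter (fun i => (-2:ℝ) = eig i) Finset.univ.val)
        = (Finset.univ.filter (fun i => (-2:ℝ) = eig i)).card := by
      rw [Finset.card_def, Finset.filter_val]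
    rw [hmc]
    have hcv : Fintype.card (Fin n ⊕ Fin n) = 2*n := by simp; omega
    omega
  · show (Multiset.map eig Finset.univ.val).sum = 0
    have : (Multiset.map eig Finset.univ.val).sum = ∑ i, eig i := rfl
    rw [this, ← herm_trace hherm, htr]
  · rw [Multiset.map_map]
    have : (Multiset.map ((fun x => x^2) ∘ eig) Finset.univ.val).sum
        = ∑ i, (eig i)^2 := rfl
    rw [this, ← herm_trace_sq hherm, htr2]

end Fwd
section Bwd
open SimpleGraph Matrix Polynomial Finset
variable {n : ℕ}
local notation "G" => completeBipartiteGraph (Fin n) (Fin n)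

lemma backward_core (hn : 0 < n) (M : Matrix (Fin n ⊕ Fin n) (Fin n ⊕ Fin n) ℝ)
    (hherm : M.IsHermitian)
    (hroots : M.charpoly.roots =
      (3*(n:ℝ)-2) ::ₘ ((n:ℝ)-2) ::ₘ Multiset.replicate (2*n-2) (-2:ℝ))
    (g : Fin 3 → Fin n ⊕ Fin n)
    (hdet : ((M + (2:ℝ)•1).submatrix g g).det ≠ 0) : False := by
  classical
  have h3 : 3 ≤ (M + (2:ℝ)•1).rank := rank_ge_three_of_minor _ g hdet
  have hn1 : (1:ℝ) ≤ (n:ℝ) := by exact_mod_cast hn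
  have hcnt : Multiset.count (-2:ℝ) (M.charpoly.roots) = 2*n-2 := by
    rw [hroots, Multiset.count_cons_of_ne (by intro h; nlinarith),
      Multiset.count_cons_of_ne (by intro h; nlinarith), Multiset.count_replicate, if_pos rfl]
  rw [herm_roots hherm, Multiset.count_map] at hcnt
  have hmc : Multiset.card (Multiset.filter (fun i => (-2:ℝ) = hherm.eigenvalues i)
        Finset.univ.val)
      = (Finset.univ.filter (fun i => (-2:ℝ) = hherm.eigenvalues i)).card := by
    rw [Finset.card_def, Finset.filter_val]
  rw [hmc] at hcnt
  have hsplit := filter_eig_card hherm.eigenvalues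
  have hcv : Fintype.card (Fin n ⊕ Fin n) = 2*n := by simp; omega
  have hrk := herm_rank_two_smul_one hherm
  omega

end Bwd

open Matrix Polynomial

/-- A signed complete bipartite graph `Σ = (K_{n,n}, σ)` is balanced if
and only if the spectrum of `D^max(Σ)` (equivalently, of `D^min(Σ)`) is: `3n - 2` with
multiplicity `1`, `n - 2` with multiplicity `1`, and `-2` with multiplicity `2n - 2`. -/
theorem balanced_iff_Knn_distance_spectrum (n : ℕ) (hn : 0 < n)
    (σ : (Fin n ⊕ Fin n) → (Fin n ⊕ Fin n) → ℤ)
    (hσ : IsSignature (completeBipartiteGraph (Fin n) (Fin n)) σ) :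
    (IsBalanced (completeBipartiteGraph (Fin n) (Fin n)) σ ↔
      (Dmax (completeBipartiteGraph (Fin n) (Fin n)) σ).charpoly.roots =
        (3 * (n : ℝ) - 2) ::ₘ ((n : ℝ) - 2) ::ₘ
          Multiset.replicate (2 * n - 2) (-2 : ℝ)) ∧
    (IsBalanced (completeBipartiteGraph (Fin n) (Fin n)) σ ↔
      (Dmin (completeBipartiteGraph (Fin n) (Fin n)) σ).charpoly.roots =
        (3 * (n : ℝ) - 2) ::ₘ ((n : ℝ) - 2) ::ₘ
          Multiset.replicate (2 * n - 2) (-2 : ℝ)) := by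
  classical
  set G' := completeBipartiteGraph (Fin n) (Fin n) with hG'
  -- Hermitian facts
  have hhermMax : (Dmax G' σ).IsHermitian := by
    rw [Matrix.IsHermitian]
    ext u v
    rw [conjTranspose_apply, star_trivial]
    show Dmax G' σ v u = Dmax G' σ u v
    unfold Dmax
    simp only [Matrix.of_apply]
    rw [sigmaMax_comm hσ.1 v u, SimpleGraph.dist_comm]
  have hhermMin : (Dmin G' σ).IsHermitian := by
    rw [Matrix.IsHermitian]
    ext u v
    rw [conjTranspose_apply, star_trivial]
    show Dmin G' σ v u = Dmin G' σ u v
    unfold Dmin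
    simp only [Matrix.of_apply]
    rw [sigmaMin_comm hσ.1 v u, SimpleGraph.dist_comm]
  -- forward direction
  have forward : IsBalanced G' σ →
      (Dmax G' σ).charpoly.roots =
        (3 * (n : ℝ) - 2) ::ₘ ((n : ℝ) - 2) ::ₘ Multiset.replicate (2 * n - 2) (-2 : ℝ) ∧
      (Dmin G' σ).charpoly.roots =
        (3 * (n : ℝ) - 2) ::ₘ ((n : ℝ) - 2) ::ₘ Multiset.replicate (2 * n - 2) (-2 : ℝ) := by
    intro hb
    obtain ⟨s, hs⟩ := H4_pot hσ hn (fun u v w w' h1 h2 h3 h4 => balanced_H4 hσ hb h1 h2 h3 h4)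
    have hmax : ∀ u v, Dmax G' σ u v = ((s u : ℝ) * (s v : ℝ)) * ((G').dist u v : ℝ) := by
      intro u v
      unfold Dmax
      simp only [Matrix.of_apply]
      rw [sigmaMax_pot hs (knn_reachable hn u v)]
      push_cast
      ring
    have hmin : ∀ u v, Dmin G' σ u v = ((s u : ℝ) * (s v : ℝ)) * ((G').dist u v : ℝ) := by
      intro u v
      unfold Dmin
      simp only [Matrix.of_apply]
      rw [sigmaMin_pot hs (knn_reachable hn u v)]
      push_cast
      ring
    exact ⟨forward_core hn s hs.1 _ hmax, forward_core hn s hs.1 _ hmin⟩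
  refine ⟨⟨fun hb => (forward hb).1, ?_⟩, ⟨fun hb => (forward hb).2, ?_⟩⟩
  · -- Dmax backward
    intro hroots
    by_contra hnb
    obtain ⟨u, v, w, w', h1, h2, h3, h4, huv, hnadj, q1, q2⟩ := not_balanced_data hσ hn hnb
    set N := Dmax G' σ + (2:ℝ)•1 with hN
    have Ndiag : ∀ x, N x x = 2 := by
      intro x
      rw [hN, Matrix.add_apply, Matrix.smul_apply, Matrix.one_apply_eq, smul_eq_mul]
      show ((sigmaMax G' σ x x : ℝ) * ((G').dist x x : ℝ)) + 2 * 1 = 2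
      rw [SimpleGraph.dist_self]
      norm_num
    have Nadj : ∀ {x y}, (G').Adj x y → N x y = (σ x y : ℝ) := by
      intro x y h
      rw [hN, Matrix.add_apply, Matrix.smul_apply, Matrix.one_apply_ne h.ne, smul_eq_mul]
      show ((sigmaMax G' σ x y : ℝ) * ((G').dist x y : ℝ)) + 2 * 0 = (σ x y : ℝ)
      rw [sigmaMax_adj hσ h, dist_adj h]
      norm_num
    have Nuv : N u v = 2 := by
      have hsmax : sigmaMax G' σ u v = 1 := by
        unfold sigmaMax
        rw [if_pos]
        exact ⟨Walk.cons h1 (Walk.cons h2 Walk.nil), twoPath_isShortestPath huv hnadj h1 h2,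
          by rw [walkSign_cons, walkSign_cons, walkSign_nil, mul_one]; exact q1⟩
      rw [hN, Matrix.add_apply, Matrix.smul_apply, Matrix.one_apply_ne huv, smul_eq_mul]
      show ((sigmaMax G' σ u v : ℝ) * ((G').dist u v : ℝ)) + 2 * 0 = 2
      rw [hsmax, dist_two huv hnadj h1 h2]
      norm_num
    have Nvu : N v u = 2 := by
      have : N v u = N u v := by
        rw [hN, Matrix.add_apply, Matrix.add_apply]
        congr 1
        · show Dmax G' σ v u = Dmax G' σ u v
          conv_lhs => rw [← hhermMax]
          rw [conjTranspose_apply, star_trivial]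
        · rw [Matrix.smul_apply, Matrix.smul_apply, Matrix.one_apply_ne huv,
            Matrix.one_apply_ne (Ne.symm huv)]
      rw [this, Nuv]
    have hdet : (N.submatrix ![u, v, w'] ![u, v, w']).det ≠ 0 := by
      rw [Matrix.det_fin_three]
      simp only [Matrix.submatrix_apply]
      rw [show (![u, v, w'] : Fin 3 → Fin n ⊕ Fin n) 0 = u from rfl,
        show (![u, v, w'] : Fin 3 → Fin n ⊕ Fin n) 1 = v from rfl,
        show (![u, v, w'] : Fin 3 → Fin n ⊕ Fin n) 2 = w' from rfl,
        Ndiag, Ndiag, Ndiag, Nuv, Nvu, Nadj h3, Nadj h3.symm, Nadj h4, Nadj h4.symm,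
        hσ.1 w' u, hσ.1 v w']
      rcases hσ.2 u w' h3 with a1 | a1 <;> rcases hσ.2 w' v h4 with b1 | b1 <;>
        rw [a1, b1] at q2 ⊢ <;> norm_num at q2 <;> norm_num
    exact backward_core hn _ hhermMax hroots ![u, v, w'] hdet
  · -- Dmin backward
    intro hroots
    by_contra hnb
    obtain ⟨u, v, w, w', h1, h2, h3, h4, huv, hnadj, q1, q2⟩ := not_balanced_data hσ hn hnb
    set N := Dmin G' σ + (2:ℝ)•1 with hN
    have Ndiag : ∀ x, N x x = 2 := by
      intro x
      rw [hN, Matrix.add_apply, Matrix.smul_apply, Matrix.one_apply_eq, smul_eq_mul]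
      show ((sigmaMin G' σ x x : ℝ) * ((G').dist x x : ℝ)) + 2 * 1 = 2
      rw [SimpleGraph.dist_self]
      norm_num
    have Nadj : ∀ {x y}, (G').Adj x y → N x y = (σ x y : ℝ) := by
      intro x y h
      rw [hN, Matrix.add_apply, Matrix.smul_apply, Matrix.one_apply_ne h.ne, smul_eq_mul]
      show ((sigmaMin G' σ x y : ℝ) * ((G').dist x y : ℝ)) + 2 * 0 = (σ x y : ℝ)
      rw [sigmaMin_adj hσ h, dist_adj h]
      norm_num
    have Nuv : N u v = -2 := by
      have hsmin : sigmaMin G' σ u v = -1 := by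
        unfold sigmaMin
        rw [if_neg]
        intro hall
        have := hall (Walk.cons h3 (Walk.cons h4 Walk.nil))
          (twoPath_isShortestPath huv hnadj h3 h4)
        rw [walkSign_cons, walkSign_cons, walkSign_nil, mul_one] at this
        omega
      rw [hN, Matrix.add_apply, Matrix.smul_apply, Matrix.one_apply_ne huv, smul_eq_mul]
      show ((sigmaMin G' σ u v : ℝ) * ((G').dist u v : ℝ)) + 2 * 0 = -2
      rw [hsmin, dist_two huv hnadj h1 h2]
      norm_num
    have Nvu : N v u = -2 := by
      have : N v u = N u v := by
        rw [hN, Matrix.add_apply, Matrix.add_apply]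
        congr 1
        · show Dmin G' σ v u = Dmin G' σ u v
          conv_lhs => rw [← hhermMin]
          rw [conjTranspose_apply, star_trivial]
        · rw [Matrix.smul_apply, Matrix.smul_apply, Matrix.one_apply_ne huv,
            Matrix.one_apply_ne (Ne.symm huv)]
      rw [this, Nuv]
    have hdet : (N.submatrix ![u, v, w] ![u, v, w]).det ≠ 0 := by
      rw [Matrix.det_fin_three]
      simp only [Matrix.submatrix_apply]
      rw [show (![u, v, w] : Fin 3 → Fin n ⊕ Fin n) 0 = u from rfl,
        show (![u, v, w] : Fin 3 → Fin n ⊕ Fin n) 1 = v from rfl,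
        show (![u, v, w] : Fin 3 → Fin n ⊕ Fin n) 2 = w from rfl,
        Ndiag, Ndiag, Ndiag, Nuv, Nvu, Nadj h1, Nadj h1.symm, Nadj h2, Nadj h2.symm,
        hσ.1 w u, hσ.1 v w]
      rcases hσ.2 u w h1 with a1 | a1 <;> rcases hσ.2 w v h2 with b1 | b1 <;>
        rw [a1, b1] at q1 ⊢ <;> norm_num at q1 <;> norm_num
    exact backward_core hn _ hhermMin hroots ![u, v, w] hdet
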